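/- The set of cardinalities of fibers of morphisms in a structure category forms a structure monoid: if Δ is a wide subcategory of FinOrd closed under coproducts of morphisms and under components of similarity natural transformations, and I is the set of all cardinalities |f⁻¹{i}| for f : [m] → [n] in Δ and i ∈ [n], then 1 ∈ I and I is closed under I-indexed sums. -/
import Mathlib



/-- The element of `Fin (∑ i, k i)` determined by block `p.1` and offset `p.2`. -/
def sigmaToFin {n : ℕ} {k : Fin n → ℕ} (p : (i : Fin n) × Fin (k i)) : Fin (∑ i, k i) :=
  ⟨(∑ j ∈ Finset.univ.filter fun j => j < p.1, k j) + p.2.val, by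
    have hsub := Finset.sum_le_sum_of_subset (f := k)
      (Finset.subset_univ (insert p.1 (Finset.univ.filter fun j => j < p.1)))
    rw [Finset.sum_insert (by simp)] at hsub
    have := p.2.isLt
    omega⟩

/-- Decomposition of an element of `Fin (∑ i, k i)` into a block index and an offset. -/
def finToSigma {n : ℕ} {k : Fin n → ℕ} (p : Fin (∑ i, k i)) : (i : Fin n) × Fin (k i) :=
  (List.ofFn fun i => List.ofFn fun x : Fin (k i) =>
    (⟨i, x⟩ : (i : Fin n) × Fin (k i))).flatten.get (Fin.cast (by simp [Function.comp_def, List.sum_ofFn]) p)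

/-- Coproduct of two functions between finite ordinals, acting blockwise. -/
def coprodMap {m₁ n₁ m₂ n₂ : ℕ} (f : Fin m₁ → Fin n₁) (g : Fin m₂ → Fin n₂) :
    Fin (m₁ + m₂) → Fin (n₁ + n₂) :=
  finSumFinEquiv ∘ Sum.map f g ∘ finSumFinEquiv.symm

/-- The similarity component `θ'_{k₁,…,kₙ}` of `θ : [m] → [n]`. -/
def simComp {m n : ℕ} (θ : Fin m → Fin n) (k : Fin n → ℕ) :
    Fin (∑ i, k (θ i)) → Fin (∑ j, k j) :=
  fun p => sigmaToFin ⟨θ (finToSigma p).1, (finToSigma p).2⟩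

/-- Cardinality of the fiber of `f` over `i`. -/
def fiberCard {m n : ℕ} (f : Fin m → Fin n) (i : Fin n) : ℕ :=
  (Finset.univ.filter fun x => f x = i).card

/-- A structure category: a wide subcategory of `FinOrd` closed under coproducts of
morphisms and under similarity components. -/
structure IsStructCat (Δ : ∀ m n : ℕ, Set (Fin m → Fin n)) : Prop where
  id_mem : ∀ n, id ∈ Δ n n
  comp_mem : ∀ {k m n : ℕ} (f : Fin k → Fin m) (g : Fin m → Fin n),
    f ∈ Δ k m → g ∈ Δ m n → g ∘ f ∈ Δ k n
  coprod_mem : ∀ {m₁ n₁ m₂ n₂ : ℕ} (f : Fin m₁ → Fin n₁) (g : Fin m₂ → Fin n₂),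
    f ∈ Δ m₁ n₁ → g ∈ Δ m₂ n₂ → coprodMap f g ∈ Δ (m₁ + m₂) (n₁ + n₂)
  sim_mem : ∀ {m n : ℕ} (θ : Fin m → Fin n), θ ∈ Δ m n → ∀ k : Fin n → ℕ,
    simComp θ k ∈ Δ (∑ i, k (θ i)) (∑ j, k j)

/-- A structure monoid: a subset of ℕ containing 1 and closed under `I`-indexed sums. -/
def IsStructMonoid (I : Set ℕ) : Prop :=
  1 ∈ I ∧ ∀ k ∈ I, ∀ a : Fin k → ℕ, (∀ i, a i ∈ I) → (∑ i, a i) ∈ I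

/-- `Δ^I` : functions all of whose fibers have cardinality in `I`. -/
def DeltaUp (I : Set ℕ) : ∀ m n : ℕ, Set (Fin m → Fin n) :=
  fun _ _ => {f | ∀ i, fiberCard f i ∈ I}

/-- The unique map `[n] → [1]`. -/
def bang (n : ℕ) : Fin n → Fin 1 := fun _ => 0

/-- `Δ_I` : the smallest structure category containing the maps `[n] → [1]` for `n ∈ I`. -/
def GenDelta (I : Set ℕ) : ∀ m n : ℕ, Set (Fin m → Fin n) := fun m n =>
  {f | ∀ Δ : ∀ m n : ℕ, Set (Fin m → Fin n), IsStructCat Δ →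
    (∀ k ∈ I, bang k ∈ Δ k 1) → f ∈ Δ m n}


private lemma aux_cast (Δ : ∀ m n : ℕ, Set (Fin m → Fin n)) {m n m' n' : ℕ}
    (hm : m = m') (hn : n = n') (h : (Δ m n).Nonempty) : (Δ m' n').Nonempty := by
  subst hm; subst hn; exact h

/-- From a morphism with a fiber of size `k` over `i`, the similarity component with
indicator multiplicities yields a morphism `[k] → [1]` in `Δ`. -/
private lemma aux_bang (Δ : ∀ m n : ℕ, Set (Fin m → Fin n)) (hΔ : IsStructCat Δ)
    {m n : ℕ} (f : Fin m → Fin n) (hf : f ∈ Δ m n) (i : Fin n) :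
    (Δ (fiberCard f i) 1).Nonempty := by
  have h := hΔ.sim_mem f hf (fun j => if j = i then 1 else 0)
  refine aux_cast Δ ?_ ?_ ⟨_, h⟩
  · rw [fiberCard, Finset.card_filter]
  · simp

private lemma aux_sum (Δ : ∀ m n : ℕ, Set (Fin m → Fin n)) (hΔ : IsStructCat Δ) :
    ∀ (k : ℕ) (a : Fin k → ℕ), (∀ i, (Δ (a i) 1).Nonempty) →
      (Δ (∑ i, a i) k).Nonempty := by
  intro k
  induction k with
  | zero =>
    intro a _
    exact aux_cast Δ (by simp) rfl ⟨id, hΔ.id_mem 0⟩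
  | succ k ih =>
    intro a ha
    obtain ⟨f0, hf0⟩ := ha 0
    obtain ⟨g, hg⟩ := ih (fun i => a i.succ) (fun i => ha i.succ)
    refine aux_cast Δ ?_ (Nat.add_comm 1 k)
      ⟨_, hΔ.coprod_mem f0 g hf0 hg⟩
    rw [Fin.sum_univ_succ]

/-- The set of fiber cardinalities of the morphisms of a structure category is a
structure monoid. -/
theorem stmt_1 (Δ : ∀ m n : ℕ, Set (Fin m → Fin n)) (hΔ : IsStructCat Δ) :
    IsStructMonoid {c : ℕ | ∃ (m n : ℕ) (f : Fin m → Fin n) (i : Fin n),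
      f ∈ Δ m n ∧ fiberCard f i = c} := by
  constructor
  · exact ⟨1, 1, id, 0, hΔ.id_mem 1, by decide⟩
  · rintro k ⟨m, n, f, i, hf, hk⟩ a ha
    have hbangs : ∀ x : Fin k, (Δ (a x) 1).Nonempty := by
      intro x
      obtain ⟨m', n', g, j, hg, hcard⟩ := ha x
      exact aux_cast Δ hcard rfl (aux_bang Δ hΔ g hg j)
    obtain ⟨g, hg⟩ := aux_sum Δ hΔ k a hbangs
    obtain ⟨b, hb⟩ := aux_cast Δ hk rfl (aux_bang Δ hΔ f hf i)
    refine ⟨∑ i, a i, 1, b ∘ g, 0, hΔ.comp_mem g b hg hb, ?_⟩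
    rw [fiberCard]
    rw [Finset.filter_true_of_mem (fun x _ => Subsingleton.elim _ _)]
    simp
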